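/- Let a and b be distinct points of the Euclidean plane ℝ² and let θ be a real number with 0 < θ < π. Writing det(u, v) = u₁v₂ − u₂v₁ for u, v ∈ ℝ², the set { p ∈ ℝ² | det(b − a, p − a) > 0 and ∠(a, p, b) ≥ θ } is convex, where ∠(a, p, b) denotes the (undirected) angle at p in the triangle a p b. -/

import Mathlib

open InnerProductGeometry in
/-- Key characterization: on the positive side of the line, the angle condition
is equivalent to a quadratic inequality. -/
theorem angle_iff_quad (a b p : EuclideanSpace ℝ (Fin 2))
    (θ : ℝ) (hθ₁ : 0 < θ) (hθ₂ : θ < Real.pi)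
    (hd : 0 < (b - a) 0 * (p - a) 1 - (b - a) 1 * (p - a) 0) :
    (θ ≤ EuclideanGeometry.angle a p b) ↔
      Real.sin θ * ((a 0 - p 0) * (b 0 - p 0) + (a 1 - p 1) * (b 1 - p 1)) -
        Real.cos θ * ((b - a) 0 * (p - a) 1 - (b - a) 1 * (p - a) 0) ≤ 0 := by
  set x : EuclideanSpace ℝ (Fin 2) := a - p with hx
  set y : EuclideanSpace ℝ (Fin 2) := b - p with hy
  have hdcoord : (b - a) 0 * (p - a) 1 - (b - a) 1 * (p - a) 0
      = x 0 * y 1 - x 1 * y 0 := by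
    simp only [hx, hy, PiLp.sub_apply]; ring
  have hD : (0:ℝ) < x 0 * y 1 - x 1 * y 0 := hdcoord ▸ hd
  have hxy : ∀ u v : EuclideanSpace ℝ (Fin 2),
      (inner ℝ u v : ℝ) = u 0 * v 0 + u 1 * v 1 := by
    intro u v
    simp [PiLp.inner_apply, Fin.sum_univ_two, mul_comm]
  have hs : (inner ℝ x y : ℝ)
      = (a 0 - p 0) * (b 0 - p 0) + (a 1 - p 1) * (b 1 - p 1) := by
    rw [hxy]; simp [hx, hy, PiLp.sub_apply]
  -- x ≠ 0, y ≠ 0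
  have hx0 : x ≠ 0 := by
    intro h
    have h0 : x 0 = 0 := by rw [h]; rfl
    have h1 : x 1 = 0 := by rw [h]; rfl
    rw [h0, h1] at hD; nlinarith
  have hy0 : y ≠ 0 := by
    intro h
    have h0 : y 0 = 0 := by rw [h]; rfl
    have h1 : y 1 = 0 := by rw [h]; rfl
    rw [h0, h1] at hD; nlinarith
  have hN : (0:ℝ) < ‖x‖ * ‖y‖ :=
    mul_pos (norm_pos_iff.2 hx0) (norm_pos_iff.2 hy0)
  set α := EuclideanGeometry.angle a p b with hα
  have hαdef : α = InnerProductGeometry.angle x y := by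
    rw [hα, EuclideanGeometry.angle, hx, hy]
    congr 1
  have hcos : Real.cos α * (‖x‖ * ‖y‖) = (inner ℝ x y : ℝ) := by
    rw [hαdef]; exact cos_angle_mul_norm_mul_norm x y
  have hsin : Real.sin α * (‖x‖ * ‖y‖) = x 0 * y 1 - x 1 * y 0 := by
    rw [hαdef, sin_angle_mul_norm_mul_norm]
    have : (inner ℝ x x : ℝ) * (inner ℝ y y : ℝ) - (inner ℝ x y : ℝ) * (inner ℝ x y : ℝ)
        = (x 0 * y 1 - x 1 * y 0) ^ 2 := by
      rw [hxy, hxy, hxy]; ring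
    rw [this, Real.sqrt_sq hD.le]
  have hα0 : 0 ≤ α := by rw [hαdef]; exact angle_nonneg x y
  have hαπ : α ≤ Real.pi := by rw [hαdef]; exact angle_le_pi x y
  -- θ ≤ α ↔ sin (θ - α) ≤ 0
  have key : θ ≤ α ↔ Real.sin (θ - α) ≤ 0 := by
    constructor
    · intro h
      exact Real.sin_nonpos_of_nonpos_of_neg_pi_le (by linarith) (by linarith)
    · intro h
      by_contra hlt
      push_neg at hlt
      have : 0 < Real.sin (θ - α) :=
        Real.sin_pos_of_pos_of_lt_pi (by linarith) (by linarith)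
      linarith
  rw [key]
  rw [Real.sin_sub]
  constructor
  · intro h
    have h2 : (Real.sin θ * Real.cos α - Real.cos θ * Real.sin α) * (‖x‖ * ‖y‖) ≤ 0 :=
      mul_nonpos_of_nonpos_of_nonneg h hN.le
    calc Real.sin θ * ((a 0 - p 0) * (b 0 - p 0) + (a 1 - p 1) * (b 1 - p 1)) -
        Real.cos θ * ((b - a) 0 * (p - a) 1 - (b - a) 1 * (p - a) 0)
        = (Real.sin θ * Real.cos α - Real.cos θ * Real.sin α) * (‖x‖ * ‖y‖) := by
          rw [hdcoord, ← hs, ← hcos, ← hsin]; ring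
      _ ≤ 0 := h2
  · intro h
    have h2 : (Real.sin θ * Real.cos α - Real.cos θ * Real.sin α) * (‖x‖ * ‖y‖) ≤ 0 := by
      calc (Real.sin θ * Real.cos α - Real.cos θ * Real.sin α) * (‖x‖ * ‖y‖)
          = Real.sin θ * ((a 0 - p 0) * (b 0 - p 0) + (a 1 - p 1) * (b 1 - p 1)) -
            Real.cos θ * ((b - a) 0 * (p - a) 1 - (b - a) 1 * (p - a) 0) := by
            rw [hdcoord, ← hs, ← hcos, ← hsin]; ring
        _ ≤ 0 := h
    nlinarith [h2, hN]

theorem angle_halfplane_region_convex (a b : EuclideanSpace ℝ (Fin 2)) (hab : a ≠ b)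
    (θ : ℝ) (hθ₁ : 0 < θ) (hθ₂ : θ < Real.pi) :
    Convex ℝ {p : EuclideanSpace ℝ (Fin 2) |
      0 < (b - a) 0 * (p - a) 1 - (b - a) 1 * (p - a) 0 ∧
      θ ≤ EuclideanGeometry.angle a p b} := by
  intro p hp q hq t u ht hu htu
  obtain ⟨hpd, hpa⟩ := hp
  obtain ⟨hqd, hqa⟩ := hq
  have hsθ : 0 < Real.sin θ := Real.sin_pos_of_pos_of_lt_pi hθ₁ hθ₂
  set r : EuclideanSpace ℝ (Fin 2) := t • p + u • q with hr
  have hr0 : r 0 = t * p 0 + u * q 0 := rfl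
  have hr1 : r 1 = t * p 1 + u * q 1 := rfl
  -- affinity of the determinant
  have hDr : (b - r) 0 * (r - a) 1 - (b - r) 1 * (r - a) 0 = 0 → True := fun _ => trivial
  have hdet : (b - a) 0 * (r - a) 1 - (b - a) 1 * (r - a) 0
      = t * ((b - a) 0 * (p - a) 1 - (b - a) 1 * (p - a) 0)
      + u * ((b - a) 0 * (q - a) 1 - (b - a) 1 * (q - a) 0) := by
    simp only [PiLp.sub_apply, hr0, hr1]
    have h1 : u = 1 - t := by linarith
    rw [h1]; ring
  have hdr : 0 < (b - a) 0 * (r - a) 1 - (b - a) 1 * (r - a) 0 := by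
    rw [hdet]
    rcases ht.eq_or_lt with h | h
    · have hu1 : u = 1 := by linarith
      rw [← h, hu1]; simpa using hqd
    · nlinarith [mul_pos h hpd, mul_nonneg hu hqd.le]
  refine ⟨hdr, ?_⟩
  rw [angle_iff_quad a b r θ hθ₁ hθ₂ hdr]
  rw [angle_iff_quad a b p θ hθ₁ hθ₂ hpd] at hpa
  rw [angle_iff_quad a b q θ hθ₁ hθ₂ hqd] at hqa
  simp only [PiLp.sub_apply, hr0, hr1] at *
  have h1 : u = 1 - t := by linarith
  subst h1
  nlinarith [sq_nonneg (p 0 - q 0), sq_nonneg (p 1 - q 1), mul_nonneg ht hu,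
    mul_nonneg (mul_nonneg ht hu) hsθ.le,
    mul_nonneg (mul_nonneg (mul_nonneg ht hu) hsθ.le) (sq_nonneg (p 0 - q 0)),
    mul_nonneg (mul_nonneg (mul_nonneg ht hu) hsθ.le) (sq_nonneg (p 1 - q 1))]
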